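/- Let G be a graph with minimum degree at least 2. In any residual graph R of the total domination game on G in which every legal move has value at most 4, R contains no white leaf and no green leaf; consequently every component of R is either a P4 with blue leaves and white internal vertices, or a P3 with blue leaves and green center. -/

import Mathlib

open SimpleGraph Finset

inductive GameColor | white | green | blue | red
deriving DecidableEq

def GameColor.weight : GameColor → ℕ
  | white => 3
  | green => 2
  | blue => 1
  | red => 0

variable {V : Type} [Fintype V] [DecidableEq V]

/-- The set of vertices totally dominated by the played set `D`. -/
def totDom (G : SimpleGraph V) [DecidableRel G.Adj] (D : Finset V) : Finset V :=
  Finset.univ.filter fun u => ∃ v ∈ D, G.Adj u v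

/-- A vertex `v` is a legal move if playing it totally dominates a new vertex. -/
def isLegal (G : SimpleGraph V) [DecidableRel G.Adj] (D : Finset V) (v : V) : Prop :=
  ∃ u, G.Adj v u ∧ u ∉ totDom G D

instance (G : SimpleGraph V) [DecidableRel G.Adj] (D : Finset V) :
    DecidablePred (isLegal G D) := fun v =>
  decidable_of_iff (∃ u, G.Adj v u ∧ u ∉ totDom G D) Iff.rfl

/-- The color of a vertex in the partially total dominated graph with played set `D`. -/
def colorOf (G : SimpleGraph V) [DecidableRel G.Adj] (D : Finset V) (v : V) : GameColor :=
  if v ∈ totDom G D then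
    (if isLegal G D v then .blue else .red)
  else (if v ∈ D then .green else .white)

/-- The total weight of the colored graph. -/
def totalWeight (G : SimpleGraph V) [DecidableRel G.Adj] (D : Finset V) : ℕ :=
  ∑ v, (colorOf G D v).weight

/-- The residualGraph graph: delete red vertices and blue–blue edges. -/
def residualGraph (G : SimpleGraph V) [DecidableRel G.Adj] (D : Finset V) : SimpleGraph V where
  Adj u w := G.Adj u w ∧ colorOf G D u ≠ .red ∧ colorOf G D w ≠ .red ∧
      ¬(colorOf G D u = .blue ∧ colorOf G D w = .blue)
  symm := ⟨fun u w ⟨h, a, b, c⟩ => ⟨h.symm, b, a, fun ⟨x, y⟩ => c ⟨y, x⟩⟩⟩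
  loopless := ⟨fun u ⟨h, _⟩ => G.loopless.irrefl u h⟩

instance (G : SimpleGraph V) [DecidableRel G.Adj] (D : Finset V) :
    DecidableRel (residualGraph G D).Adj := fun u w =>
  decidable_of_iff (G.Adj u w ∧ colorOf G D u ≠ .red ∧ colorOf G D w ≠ .red ∧
      ¬(colorOf G D u = .blue ∧ colorOf G D w = .blue)) Iff.rfl

def legalMoves (G : SimpleGraph V) [DecidableRel G.Adj] (D : Finset V) : Finset V :=
  Finset.univ.filter (isLegal G D)

/-- The value of the total domination game from position `D` with `fuel` moves allowed,
where `isDom = true` when it is Dominator's turn (Dominator minimizes, Staller maximizes).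
Since each legal move totally dominates a new vertex, fuel `Fintype.card V` always suffices. -/
def gameVal (G : SimpleGraph V) [DecidableRel G.Adj] : Bool → ℕ → Finset V → ℕ
  | _, 0, _ => 0
  | isDom, n + 1, D =>
    if h : (legalMoves G D).Nonempty then
      if isDom then 1 + (legalMoves G D).inf' h fun v => gameVal G false n (insert v D)
      else 1 + (legalMoves G D).sup' h fun v => gameVal G true n (insert v D)
    else 0

/-- The game total domination number `γ_tg(G)`: Dominator starts, both play optimally. -/
def gtd (G : SimpleGraph V) [DecidableRel G.Adj] : ℕ :=
  gameVal G true (Fintype.card V) ∅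

section Aux

variable {G : SimpleGraph V} [DecidableRel G.Adj] {D : Finset V}

lemma mem_totDom {u : V} : u ∈ totDom G D ↔ ∃ v ∈ D, G.Adj u v := by
  simp [totDom]

lemma mem_totDom_insert {v u : V} :
    u ∈ totDom G (insert v D) ↔ u ∈ totDom G D ∨ G.Adj u v := by
  simp [totDom, or_comm]

lemma color_white_iff {v : V} : colorOf G D v = .white ↔ v ∉ totDom G D ∧ v ∉ D := by
  unfold colorOf; split_ifs <;> simp_all

lemma color_green_iff {v : V} : colorOf G D v = .green ↔ v ∉ totDom G D ∧ v ∈ D := by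
  unfold colorOf; split_ifs <;> simp_all

lemma color_blue_iff {v : V} : colorOf G D v = .blue ↔ v ∈ totDom G D ∧ isLegal G D v := by
  unfold colorOf; split_ifs <;> simp_all

lemma color_red_iff {v : V} : colorOf G D v = .red ↔ v ∈ totDom G D ∧ ¬ isLegal G D v := by
  unfold colorOf; split_ifs <;> simp_all

lemma und_not_red {v : V} (h : v ∉ totDom G D) : colorOf G D v ≠ .red :=
  fun hc => h (color_red_iff.1 hc).1

lemma und_not_blue {v : V} (h : v ∉ totDom G D) : colorOf G D v ≠ .blue :=
  fun hc => h (color_blue_iff.1 hc).1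

/-- A dominated neighbor of an undominated vertex is blue. -/
lemma dom_nbr_blue {v t : V} (hv : v ∉ totDom G D) (ht : t ∈ totDom G D)
    (hadj : G.Adj v t) : colorOf G D t = .blue :=
  color_blue_iff.2 ⟨ht, ⟨v, hadj.symm, hv⟩⟩

lemma nbr_of_und_not_red {v t : V} (hv : v ∉ totDom G D) (hadj : G.Adj v t) :
    colorOf G D t ≠ .red := by
  by_cases ht : t ∈ totDom G D
  · rw [dom_nbr_blue hv ht hadj]; simp
  · exact und_not_red ht

lemma weight_mono (v x : V) :
    (colorOf G (insert v D) x).weight ≤ (colorOf G D x).weight := by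
  have h1 : x ∈ totDom G D → x ∈ totDom G (insert v D) := by
    rw [mem_totDom_insert]; tauto
  have h3 : isLegal G (insert v D) x → isLegal G D x := by
    rintro ⟨u, hadj, hu⟩
    exact ⟨u, hadj, fun hc => hu (mem_totDom_insert.2 (Or.inl hc))⟩
  unfold colorOf
  split_ifs <;> simp_all [GameColor.weight]

@[simp] lemma weight_white : GameColor.white.weight = 3 := rfl
@[simp] lemma weight_green : GameColor.green.weight = 2 := rfl
@[simp] lemma weight_blue : GameColor.blue.weight = 1 := rfl
@[simp] lemma weight_red : GameColor.red.weight = 0 := rfl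

lemma weight_le_three (c : GameColor) : c.weight ≤ 3 := by cases c <;> simp [GameColor.weight]

lemma dropBound (hphase2 : ∀ v, isLegal G D v → totalWeight G D ≤ totalWeight G (insert v D) + 4)
    {v : V} (hv : isLegal G D v) (S : Finset V)
    (h : (∑ x ∈ S, (colorOf G (insert v D) x).weight) + 5 ≤ ∑ x ∈ S, (colorOf G D x).weight) :
    False := by
  have hm : ∑ x ∈ Finset.univ \ S, (colorOf G (insert v D) x).weight
      ≤ ∑ x ∈ Finset.univ \ S, (colorOf G D x).weight :=
    Finset.sum_le_sum fun x _ => weight_mono v x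
  have e1 : ∑ x ∈ Finset.univ \ S, (colorOf G D x).weight + ∑ x ∈ S, (colorOf G D x).weight
      = totalWeight G D := Finset.sum_sdiff (Finset.subset_univ S)
  have e2 : ∑ x ∈ Finset.univ \ S, (colorOf G (insert v D) x).weight
        + ∑ x ∈ S, (colorOf G (insert v D) x).weight
      = totalWeight G (insert v D) := Finset.sum_sdiff (Finset.subset_univ S)
  have := hphase2 v hv
  omega

lemma drop3 (hphase2 : ∀ v, isLegal G D v → totalWeight G D ≤ totalWeight G (insert v D) + 4)
    {v : V} (hv : isLegal G D v) {a b c : V} (hab : a ≠ b) (hac : a ≠ c) (hbc : b ≠ c)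
    (h : (colorOf G (insert v D) a).weight + (colorOf G (insert v D) b).weight
        + (colorOf G (insert v D) c).weight + 5
      ≤ (colorOf G D a).weight + (colorOf G D b).weight + (colorOf G D c).weight) : False := by
  apply dropBound hphase2 hv {a, b, c}
  rw [show ({a, b, c} : Finset V) = insert a (insert b {c}) from rfl,
    Finset.sum_insert (by simp [hab, hac]), Finset.sum_insert (by simp [hbc]),
    Finset.sum_singleton, Finset.sum_insert (by simp [hab, hac]),
    Finset.sum_insert (by simp [hbc]), Finset.sum_singleton]
  omega

lemma drop4 (hphase2 : ∀ v, isLegal G D v → totalWeight G D ≤ totalWeight G (insert v D) + 4)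
    {v : V} (hv : isLegal G D v) {a b c d : V} (hab : a ≠ b) (hac : a ≠ c) (had : a ≠ d)
    (hbc : b ≠ c) (hbd : b ≠ d) (hcd : c ≠ d)
    (h : (colorOf G (insert v D) a).weight + (colorOf G (insert v D) b).weight
        + (colorOf G (insert v D) c).weight + (colorOf G (insert v D) d).weight + 5
      ≤ (colorOf G D a).weight + (colorOf G D b).weight + (colorOf G D c).weight
        + (colorOf G D d).weight) : False := by
  apply dropBound hphase2 hv {a, b, c, d}
  rw [show ({a, b, c, d} : Finset V) = insert a (insert b (insert c {d})) from rfl,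
    Finset.sum_insert (by simp [hab, hac, had]), Finset.sum_insert (by simp [hbc, hbd]),
    Finset.sum_insert (by simp [hcd]), Finset.sum_singleton,
    Finset.sum_insert (by simp [hab, hac, had]), Finset.sum_insert (by simp [hbc, hbd]),
    Finset.sum_insert (by simp [hcd]), Finset.sum_singleton]
  omega

end Aux

section Aux2

variable {G : SimpleGraph V} [DecidableRel G.Adj] {D : Finset V}

lemma after_dominated {v u : V} (h : G.Adj v u) : u ∈ totDom G (insert v D) :=
  mem_totDom_insert.2 (Or.inr h.symm)

lemma weight_after_dominated {v u : V} (h : G.Adj v u) :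
    (colorOf G (insert v D) u).weight ≤ 1 := by
  unfold colorOf
  rw [if_pos (after_dominated h)]
  split_ifs <;> simp [GameColor.weight]

lemma after_white_played {v : V} (h : colorOf G D v = .white) :
    colorOf G (insert v D) v = .green := by
  obtain ⟨h1, _⟩ := color_white_iff.1 h
  have hnd : v ∉ totDom G (insert v D) := by
    rw [mem_totDom_insert]
    push_neg
    exact ⟨h1, G.irrefl⟩
  unfold colorOf
  rw [if_neg hnd, if_pos (Finset.mem_insert_self v D)]

lemma after_red {v u : V} (hdom : u ∈ totDom G (insert v D))
    (h : ∀ t, G.Adj u t → t ∈ totDom G D ∨ G.Adj t v) :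
    colorOf G (insert v D) u = .red := by
  unfold colorOf
  rw [if_pos hdom, if_neg]
  rintro ⟨t, hadj, hnt⟩
  rw [mem_totDom_insert] at hnt
  push_neg at hnt
  rcases h t hadj with h' | h'
  exacts [hnt.1 h', hnt.2 h']

/-- The played vertex, if blue, becomes red. -/
lemma played_blue_red {v : V} (h : colorOf G D v = .blue) :
    colorOf G (insert v D) v = .red := by
  obtain ⟨h1, _⟩ := color_blue_iff.1 h
  exact after_red (mem_totDom_insert.2 (Or.inl h1)) fun t ht => Or.inr ht.symm

/-- An undominated neighbor of the played vertex drops its weight by at least 2. -/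
lemma und_nbr_drop {v u : V} (hadj : G.Adj v u) (hund : u ∉ totDom G D) :
    (colorOf G (insert v D) u).weight + 2 ≤ (colorOf G D u).weight := by
  by_cases hD : u ∈ D
  · have hb : colorOf G D u = .green := color_green_iff.2 ⟨hund, hD⟩
    have ha : colorOf G (insert v D) u = .red :=
      after_red (after_dominated hadj) fun t ht => Or.inl (mem_totDom.2 ⟨u, hD, ht.symm⟩)
    rw [hb, ha]
    simp [GameColor.weight]
  · have hb : colorOf G D u = .white := color_white_iff.2 ⟨hund, hD⟩
    have := weight_after_dominated (D := D) hadj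
    rw [hb, weight_white]
    omega

/-- A blue vertex has at most one undominated neighbor. -/
lemma blue_unique (hphase2 : ∀ v, isLegal G D v → totalWeight G D ≤ totalWeight G (insert v D) + 4)
    {x u1 u2 : V} (hx : colorOf G D x = .blue) (h1 : G.Adj x u1) (hu1 : u1 ∉ totDom G D)
    (h2 : G.Adj x u2) (hu2 : u2 ∉ totDom G D) : u1 = u2 := by
  by_contra hne
  have hxd := (color_blue_iff.1 hx).1
  have hleg : isLegal G D x := (color_blue_iff.1 hx).2
  have d1 := und_nbr_drop (D := D) h1 hu1
  have d2 := und_nbr_drop (D := D) h2 hu2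
  have ax : colorOf G (insert x D) x = .red := played_blue_red hx
  refine drop3 hphase2 hleg (a := x) (b := u1) (c := u2) ?_ ?_ hne ?_
  · rintro rfl; exact hu1 hxd
  · rintro rfl; exact hu2 hxd
  · rw [ax, hx, weight_red, weight_blue]
    omega

/-- No white vertex has two white neighbors. -/
lemma white_two_white
    (hphase2 : ∀ v, isLegal G D v → totalWeight G D ≤ totalWeight G (insert v D) + 4)
    {w w1 w2 : V} (hw : colorOf G D w = .white) (hw1 : colorOf G D w1 = .white)
    (hw2 : colorOf G D w2 = .white) (h1 : G.Adj w w1) (h2 : G.Adj w w2) : w1 = w2 := by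
  by_contra hne
  have hu1 := (color_white_iff.1 hw1).1
  have hu2 := (color_white_iff.1 hw2).1
  have hleg : isLegal G D w := ⟨w1, h1, hu1⟩
  have d1 := und_nbr_drop (D := D) h1 hu1
  have d2 := und_nbr_drop (D := D) h2 hu2
  have aw : colorOf G (insert w D) w = .green := after_white_played hw
  refine drop3 hphase2 hleg (a := w) (b := w1) (c := w2) h1.ne h2.ne hne ?_
  rw [aw, hw1, hw2] at *
  rw [hw, weight_green, weight_white] at *
  omega

lemma white_no_green {w g : V} (hw : colorOf G D w = .white) (hg : colorOf G D g = .green)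
    (hadj : G.Adj w g) : False := by
  exact (color_white_iff.1 hw).1 (mem_totDom.2 ⟨g, (color_green_iff.1 hg).2, hadj⟩)

lemma green_nbr_blue {g t : V} (hg : colorOf G D g = .green) (hadj : G.Adj g t) :
    colorOf G D t = .blue := by
  have htd : t ∈ totDom G D := mem_totDom.2 ⟨g, (color_green_iff.1 hg).2, hadj.symm⟩
  exact dom_nbr_blue (color_green_iff.1 hg).1 htd hadj

end Aux2

section Aux3

variable {G : SimpleGraph V} [DecidableRel G.Adj] {D : Finset V}

lemma color_ne {a b : V} {c1 c2 : GameColor} (ha : colorOf G D a = c1)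
    (hb : colorOf G D b = c2) (hne : c1 ≠ c2) : a ≠ b :=
  fun e => hne (by rw [← ha, ← hb, e])

lemma two_nbrs (hmin : ∀ v, 2 ≤ G.degree v) (v : V) :
    ∃ a ∈ G.neighborFinset v, ∃ b ∈ G.neighborFinset v, a ≠ b := by
  apply Finset.one_lt_card.1
  have := hmin v
  rw [← SimpleGraph.card_neighborFinset_eq_degree] at this
  omega

/-- A blue vertex distinct from the played vertex, all of whose undominated neighbors
are adjacent to the played vertex, becomes red. -/
lemma blue_becomes_red
    (hphase2 : ∀ v, isLegal G D v → totalWeight G D ≤ totalWeight G (insert v D) + 4)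
    {v y u : V} (hy : colorOf G D y = .blue) (hadj : G.Adj y u) (hu : u ∉ totDom G D)
    (huv : G.Adj u v) : colorOf G (insert v D) y = .red := by
  apply after_red (mem_totDom_insert.2 (Or.inl (color_blue_iff.1 hy).1))
  intro t ht
  by_cases htd : t ∈ totDom G D
  · exact Or.inl htd
  · have : t = u := blue_unique hphase2 hy ht htd hadj hu
    subst this
    exact Or.inr huv

/-- Every white vertex has a white neighbor. -/
lemma white_has_white_nbr (hmin : ∀ v, 2 ≤ G.degree v)
    (hphase2 : ∀ v, isLegal G D v → totalWeight G D ≤ totalWeight G (insert v D) + 4)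
    {w : V} (hw : colorOf G D w = .white) :
    ∃ w', G.Adj w w' ∧ colorOf G D w' = .white := by
  by_contra hno
  push_neg at hno
  obtain ⟨hwund, hwD⟩ := color_white_iff.1 hw
  have hdom : ∀ t, G.Adj w t → t ∈ totDom G D := by
    intro t ht
    by_contra htd
    by_cases htD : t ∈ D
    · exact white_no_green hw (color_green_iff.2 ⟨htd, htD⟩) ht
    · exact hno t ht (color_white_iff.2 ⟨htd, htD⟩)
  obtain ⟨b1, hb1m, b2, hb2m, hne⟩ := two_nbrs hmin w
  rw [SimpleGraph.mem_neighborFinset] at hb1m hb2m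
  have hb1 : colorOf G D b1 = .blue := dom_nbr_blue hwund (hdom _ hb1m) hb1m
  have hb2 : colorOf G D b2 = .blue := dom_nbr_blue hwund (hdom _ hb2m) hb2m
  have hleg : isLegal G D b1 := ⟨w, hb1m.symm, hwund⟩
  refine drop3 hphase2 hleg (a := b1) (b := w) (c := b2)
    (color_ne hb1 hw (by simp)) hne (color_ne hw hb2 (by simp)) ?_
  have a1 : colorOf G (insert b1 D) b1 = .red := played_blue_red hb1
  have a2 : colorOf G (insert b1 D) w = .red :=
    after_red (after_dominated hb1m.symm) fun t ht => Or.inl (hdom t ht)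
  have a3 : colorOf G (insert b1 D) b2 = .red :=
    blue_becomes_red hphase2 hb2 hb2m.symm hwund hb1m
  rw [a1, a2, a3, hb1, hb2, hw, weight_red, weight_blue, weight_white]

/-- Two blue neighbors of a white vertex having a white neighbor must coincide. -/
lemma white_pair_blue_eq
    (hphase2 : ∀ v, isLegal G D v → totalWeight G D ≤ totalWeight G (insert v D) + 4)
    {w w' y1 y2 : V} (hw : colorOf G D w = .white) (hw' : colorOf G D w' = .white)
    (hadj : G.Adj w w') (hy1 : colorOf G D y1 = .blue) (hy2 : colorOf G D y2 = .blue)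
    (a1 : G.Adj w' y1) (a2 : G.Adj w' y2) : y1 = y2 := by
  by_contra hne
  have hwund := (color_white_iff.1 hw).1
  have hw'und := (color_white_iff.1 hw').1
  have hleg : isLegal G D w := ⟨w', hadj, hw'und⟩
  have d1 : colorOf G (insert w D) w = .green := after_white_played hw
  have d2 := weight_after_dominated (D := D) hadj
  have d3 : colorOf G (insert w D) y1 = .red :=
    blue_becomes_red hphase2 hy1 a1.symm hw'und hadj.symm
  have d4 : colorOf G (insert w D) y2 = .red :=
    blue_becomes_red hphase2 hy2 a2.symm hw'und hadj.symm
  refine drop4 hphase2 hleg (a := w) (b := w') (c := y1) (d := y2) hadj.ne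
    (color_ne hw hy1 (by simp)) (color_ne hw hy2 (by simp))
    (color_ne hw' hy1 (by simp)) (color_ne hw' hy2 (by simp)) hne ?_
  rw [d1, d3, d4, hw, hw', hy1, hy2, weight_red, weight_green, weight_white, weight_blue]
  omega

/-- Structure around a green vertex: exactly two neighbors, both blue. -/
lemma green_structure (hmin : ∀ v, 2 ≤ G.degree v)
    (hphase2 : ∀ v, isLegal G D v → totalWeight G D ≤ totalWeight G (insert v D) + 4)
    {g : V} (hg : colorOf G D g = .green) :
    ∃ b1 b2, G.Adj g b1 ∧ G.Adj g b2 ∧ colorOf G D b1 = .blue ∧ colorOf G D b2 = .blue ∧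
      b1 ≠ b2 ∧ ∀ t, G.Adj g t → t = b1 ∨ t = b2 := by
  obtain ⟨hgund, hgD⟩ := color_green_iff.1 hg
  obtain ⟨b1, hb1m, b2, hb2m, hne⟩ := two_nbrs hmin g
  rw [SimpleGraph.mem_neighborFinset] at hb1m hb2m
  have hb1 : colorOf G D b1 = .blue := green_nbr_blue hg hb1m
  have hb2 : colorOf G D b2 = .blue := green_nbr_blue hg hb2m
  refine ⟨b1, b2, hb1m, hb2m, hb1, hb2, hne, ?_⟩
  intro t ht
  by_contra hnt
  push_neg at hnt
  obtain ⟨ht1, ht2⟩ := hnt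
  have hbt : colorOf G D t = .blue := green_nbr_blue hg ht
  have hleg : isLegal G D b1 := ⟨g, hb1m.symm, hgund⟩
  refine drop4 hphase2 hleg (a := b1) (b := g) (c := b2) (d := t)
    (color_ne hb1 hg (by simp)) hne (Ne.symm ht1)
    (color_ne hg hb2 (by simp)) (color_ne hg hbt (by simp)) (fun e => ht2 e.symm) ?_
  have a1 : colorOf G (insert b1 D) b1 = .red := played_blue_red hb1
  have a2 : colorOf G (insert b1 D) g = .red :=
    after_red (after_dominated hb1m.symm) fun s hs => Or.inl (mem_totDom.2 ⟨g, hgD, hs.symm⟩)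
  have a3 : colorOf G (insert b1 D) b2 = .red :=
    blue_becomes_red hphase2 hb2 hb2m.symm hgund hb1m
  have a4 : colorOf G (insert b1 D) t = .red :=
    blue_becomes_red hphase2 hbt ht.symm hgund hb1m
  rw [a1, a2, a3, a4, hb1, hb2, hbt, hg, weight_red, weight_green, weight_blue]

/-- Structure around a white vertex: exactly two neighbors, one white and one blue. -/
lemma white_structure (hmin : ∀ v, 2 ≤ G.degree v)
    (hphase2 : ∀ v, isLegal G D v → totalWeight G D ≤ totalWeight G (insert v D) + 4)
    {w : V} (hw : colorOf G D w = .white) :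
    ∃ w' b, G.Adj w w' ∧ G.Adj w b ∧ colorOf G D w' = .white ∧ colorOf G D b = .blue ∧
      ∀ t, G.Adj w t → t = w' ∨ t = b := by
  obtain ⟨w', hadj, hw'⟩ := white_has_white_nbr hmin hphase2 hw
  obtain ⟨hwund, hwD⟩ := color_white_iff.1 hw
  -- classify an arbitrary neighbor of w
  have hclass : ∀ t, G.Adj w t → colorOf G D t = .white ∨ colorOf G D t = .blue := by
    intro t ht
    by_cases htd : t ∈ totDom G D
    · exact Or.inr (dom_nbr_blue hwund htd ht)
    · by_cases htD : t ∈ D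
      · exact absurd (white_no_green hw (color_green_iff.2 ⟨htd, htD⟩) ht) id
      · exact Or.inl (color_white_iff.2 ⟨htd, htD⟩)
  -- w has a blue neighbor
  obtain ⟨t1, ht1m, t2, ht2m, htne⟩ := two_nbrs hmin w
  rw [SimpleGraph.mem_neighborFinset] at ht1m ht2m
  have hblue : ∃ b, G.Adj w b ∧ colorOf G D b = .blue := by
    rcases hclass t1 ht1m with h1 | h1
    · rcases hclass t2 ht2m with h2 | h2
      · exact absurd (white_two_white hphase2 hw h1 h2 ht1m ht2m) htne
      · exact ⟨t2, ht2m, h2⟩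
    · exact ⟨t1, ht1m, h1⟩
  obtain ⟨b, hbm, hb⟩ := hblue
  refine ⟨w', b, hadj, hbm, hw', hb, ?_⟩
  intro t ht
  rcases hclass t ht with h | h
  · exact Or.inl (white_two_white hphase2 hw h hw' ht hadj)
  · exact Or.inr (white_pair_blue_eq hphase2 hw' hw hadj.symm h hb ht hbm)

end Aux3

section Aux4

variable {G : SimpleGraph V} [DecidableRel G.Adj] {D : Finset V}

lemma nbrR_und {v : V} (hv : v ∉ totDom G D) :
    (residualGraph G D).neighborFinset v = G.neighborFinset v := by
  ext t
  simp only [SimpleGraph.mem_neighborFinset]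
  constructor
  · exact fun h => h.1
  · intro h
    exact ⟨h, und_not_red hv, nbr_of_und_not_red hv h, fun hc => und_not_blue hv hc.1⟩

lemma nbrR_blue
    (hphase2 : ∀ v, isLegal G D v → totalWeight G D ≤ totalWeight G (insert v D) + 4)
    {x u : V} (hx : colorOf G D x = .blue) (hadj : G.Adj x u) (hu : u ∉ totDom G D) :
    (residualGraph G D).neighborFinset x = {u} := by
  ext t
  simp only [SimpleGraph.mem_neighborFinset, Finset.mem_singleton]
  constructor
  · rintro ⟨h, _, hred, hbb⟩
    by_cases htd : t ∈ totDom G D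
    · by_cases hl : isLegal G D t
      · exact absurd ⟨hx, color_blue_iff.2 ⟨htd, hl⟩⟩ hbb
      · exact absurd (color_red_iff.2 ⟨htd, hl⟩) hred
    · exact blue_unique hphase2 hx h htd hadj hu
  · rintro rfl
    exact ⟨hadj, by rw [hx]; simp, und_not_red hu, fun hc => und_not_blue hu hc.2⟩

lemma P4_of_white (hmin : ∀ v, 2 ≤ G.degree v)
    (hphase2 : ∀ v, isLegal G D v → totalWeight G D ≤ totalWeight G (insert v D) + 4)
    {w : V} (hw : colorOf G D w = .white) :
    ∃ b1 w2 b2 : V, colorOf G D b1 = .blue ∧ colorOf G D w2 = .white ∧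
      colorOf G D b2 = .blue ∧ b1 ≠ b2 ∧
      (residualGraph G D).neighborFinset b1 = {w} ∧
      (residualGraph G D).neighborFinset w = {b1, w2} ∧
      (residualGraph G D).neighborFinset w2 = {w, b2} ∧
      (residualGraph G D).neighborFinset b2 = {w2} ∧
      (∀ t, G.Adj w t → t = w2 ∨ t = b1) := by
  obtain ⟨w2, b1, hadjw2, hadjb1, hw2, hb1, hall⟩ := white_structure hmin hphase2 hw
  obtain ⟨w'', b2, hadj2, hadjb2, hw'', hb2, hall2⟩ := white_structure hmin hphase2 hw2
  have hwund := (color_white_iff.1 hw).1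
  have hw2und := (color_white_iff.1 hw2).1
  have hwe : w = w'' ∨ w = b2 := hall2 w hadjw2.symm
  have hwe2 : w'' = w := by
    rcases hwe with h | h
    · exact h.symm
    · exact absurd (h ▸ hw) (by rw [hb2]; simp)
  subst hwe2
  have hb1b2 : b1 ≠ b2 := by
    intro e
    subst e
    exact hadjw2.ne (blue_unique hphase2 hb1 hadjb1.symm hwund hadjb2.symm hw2und)
  refine ⟨b1, w2, b2, hb1, hw2, hb2, hb1b2,
    nbrR_blue hphase2 hb1 hadjb1.symm hwund, ?_, ?_,
    nbrR_blue hphase2 hb2 hadjb2.symm hw2und, hall⟩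
  · rw [nbrR_und hwund]
    ext t
    simp only [SimpleGraph.mem_neighborFinset, Finset.mem_insert, Finset.mem_singleton]
    constructor
    · intro h
      rcases hall t h with h' | h'
      exacts [Or.inr h', Or.inl h']
    · rintro (rfl | rfl)
      exacts [hadjb1, hadjw2]
  · rw [nbrR_und hw2und]
    ext t
    simp only [SimpleGraph.mem_neighborFinset, Finset.mem_insert, Finset.mem_singleton]
    constructor
    · intro h
      exact hall2 t h
    · rintro (rfl | rfl)
      exacts [hadjw2.symm, hadjb2]

lemma P3_of_green (hmin : ∀ v, 2 ≤ G.degree v)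
    (hphase2 : ∀ v, isLegal G D v → totalWeight G D ≤ totalWeight G (insert v D) + 4)
    {g : V} (hg : colorOf G D g = .green) :
    ∃ b1 b2 : V, colorOf G D b1 = .blue ∧ colorOf G D b2 = .blue ∧ b1 ≠ b2 ∧
      (residualGraph G D).neighborFinset b1 = {g} ∧
      (residualGraph G D).neighborFinset g = {b1, b2} ∧
      (residualGraph G D).neighborFinset b2 = {g} ∧
      (∀ t, G.Adj g t → t = b1 ∨ t = b2) := by
  obtain ⟨b1, b2, hadj1, hadj2, hb1, hb2, hne, hall⟩ := green_structure hmin hphase2 hg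
  have hgund := (color_green_iff.1 hg).1
  refine ⟨b1, b2, hb1, hb2, hne,
    nbrR_blue hphase2 hb1 hadj1.symm hgund, ?_,
    nbrR_blue hphase2 hb2 hadj2.symm hgund, hall⟩
  rw [nbrR_und hgund]
  ext t
  simp only [SimpleGraph.mem_neighborFinset, Finset.mem_insert, Finset.mem_singleton]
  constructor
  · exact hall t
  · rintro (rfl | rfl)
    exacts [hadj1, hadj2]

end Aux4


/-- If `G` has minimum degree at least 2 and the residual graph is in Phase 2
(every legal move has value at most 4), then the residual graph has no white leaf and no
green leaf, and every component is a `P4` blue–white–white–blue or a `P3` blue–green–blue. -/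
theorem stmt12 (G : SimpleGraph V) [DecidableRel G.Adj] (D : Finset V)
    (hmin : ∀ v, 2 ≤ G.degree v)
    (hphase2 : ∀ v, isLegal G D v → totalWeight G D ≤ totalWeight G (insert v D) + 4) :
    (∀ v, (colorOf G D v = .white ∨ colorOf G D v = .green) →
      (residualGraph G D).degree v ≠ 1) ∧
    (∀ z, colorOf G D z ≠ .red →
      (∃ b1 w1 w2 b2 : V, z ∈ ({b1, w1, w2, b2} : Finset V) ∧
        colorOf G D b1 = .blue ∧ colorOf G D w1 = .white ∧
        colorOf G D w2 = .white ∧ colorOf G D b2 = .blue ∧ b1 ≠ b2 ∧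
        (residualGraph G D).neighborFinset b1 = {w1} ∧
        (residualGraph G D).neighborFinset w1 = {b1, w2} ∧
        (residualGraph G D).neighborFinset w2 = {w1, b2} ∧
        (residualGraph G D).neighborFinset b2 = {w2}) ∨
      (∃ b1 g b2 : V, z ∈ ({b1, g, b2} : Finset V) ∧
        colorOf G D b1 = .blue ∧ colorOf G D g = .green ∧
        colorOf G D b2 = .blue ∧ b1 ≠ b2 ∧
        (residualGraph G D).neighborFinset b1 = {g} ∧
        (residualGraph G D).neighborFinset g = {b1, b2} ∧
        (residualGraph G D).neighborFinset b2 = {g})) := by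
  constructor
  · intro v hv
    have hund : v ∉ totDom G D := by
      rcases hv with h | h
      · exact (color_white_iff.1 h).1
      · exact (color_green_iff.1 h).1
    have hdeg : (residualGraph G D).degree v = G.degree v := by
      rw [← SimpleGraph.card_neighborFinset_eq_degree,
        ← SimpleGraph.card_neighborFinset_eq_degree, nbrR_und hund]
    have := hmin v
    omega
  · intro z hz
    cases hc : colorOf G D z with
    | red => exact absurd hc hz
    | white =>
      obtain ⟨b1, w2, b2, hb1, hw2, hb2, hne, e1, e2, e3, e4, _⟩ :=
        P4_of_white hmin hphase2 hc
      exact Or.inl ⟨b1, z, w2, b2, by simp, hb1, hc, hw2, hb2, hne, e1, e2, e3, e4⟩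
    | green =>
      obtain ⟨b1, b2, hb1, hb2, hne, e1, e2, e3, _⟩ := P3_of_green hmin hphase2 hc
      exact Or.inr ⟨b1, z, b2, by simp, hb1, hc, hb2, hne, e1, e2, e3⟩
    | blue =>
      obtain ⟨u, hadj, hu⟩ := (color_blue_iff.1 hc).2
      by_cases huD : u ∈ D
      · have hg : colorOf G D u = .green := color_green_iff.2 ⟨hu, huD⟩
        obtain ⟨b1, b2, hb1, hb2, hne, e1, e2, e3, hall⟩ := P3_of_green hmin hphase2 hg
        refine Or.inr ⟨b1, u, b2, ?_, hb1, hg, hb2, hne, e1, e2, e3⟩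
        rcases hall z hadj.symm with rfl | rfl <;> simp
      · have hwu : colorOf G D u = .white := color_white_iff.2 ⟨hu, huD⟩
        obtain ⟨b1, w2, b2, hb1, hw2, hb2, hne, e1, e2, e3, e4, hall⟩ :=
          P4_of_white hmin hphase2 hwu
        refine Or.inl ⟨b1, u, w2, b2, ?_, hb1, hwu, hw2, hb2, hne, e1, e2, e3, e4⟩
        rcases hall z hadj.symm with rfl | rfl
        · exact absurd hw2 (by rw [hc]; simp)
        · simp
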